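/- arXiv:2410.08640 — 2 statements merged into one kernel-verified Lean document; each statement's English description precedes it below -/
import Mathlib

section
/- Let 𝒴 ⊆ 𝒳 ⊆ Φ with 𝒳 almost parabolic of spherical type, and let u ∈ W_𝒳 be of minimal length in the coset uW_𝒴 with respect to the word length of W_𝒳 in the generating set R_𝒳. Then u(𝒴) ⊆ Φ is again almost parabolic of spherical type, W_{u(𝒴)} = uW_𝒴u⁻¹, u(o_𝒴) = o_{u(𝒴)}, and the action of u on V restricts to a bijective isometry of C[𝒴] onto C[u(𝒴)] sending z(o_𝒴) to (uzu⁻¹)(o_{u(𝒴)}) for every z ∈ W_𝒴. -/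
/-!
Context: `(W, S)` is a Coxeter system for the Coxeter matrix `M` (Mathlib's convention:
the entry `0` encodes `∞`).  `V = ⊕_{s ∈ S} ℝ·α_s` is realized as `S →₀ ℝ` with
`α_s = simpleRoot s`, equipped with the canonical symmetric bilinear form `bform M`.
The canonical faithful form-preserving representation `ρ : W →* GL(V)` and the map
`β ↦ r_β` assigning to each root its reflection are given as data, characterized by
the usual formulas (`hρ`, `hρinj`, `hρform`, `hr` below).
-/

noncomputable section

open scoped Real Pointwise

variable {S W : Type*}

/-- The simple root `α_s`. -/
def simpleRoot (s : S) : S →₀ ℝ := Finsupp.single s 1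

/-- The entry `⟨α_s, α_t⟩ = -cos (π / m_{s,t})` of the canonical bilinear form,
interpreted as `-1` when `m_{s,t} = ∞` (encoded by `0`). -/
def formEntry (M : CoxeterMatrix S) (s t : S) : ℝ :=
  if M s t = 0 then -1 else -Real.cos (Real.pi / (M s t : ℝ))

/-- The canonical symmetric bilinear form on `V = ⊕_{s ∈ S} ℝ·α_s`. -/
def bform (M : CoxeterMatrix S) : (S →₀ ℝ) →ₗ[ℝ] (S →₀ ℝ) →ₗ[ℝ] ℝ :=
  Finsupp.basisSingleOne.constr ℝ fun s =>
    Finsupp.basisSingleOne.constr ℝ fun t => formEntry M s t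

variable [Group W]

/-- The root system `Φ = { w (α_s) : w ∈ W, s ∈ S }`. -/
def rootSystem (ρ : W →* ((S →₀ ℝ) ≃ₗ[ℝ] (S →₀ ℝ))) : Set (S →₀ ℝ) :=
  Set.range fun p : W × S => ρ p.1 (simpleRoot p.2)

/-- A subset `𝒳 ⊆ V` is almost parabolic (AP): (AP1) the vectors of `𝒳` are linearly
independent, and (AP2) any two elements of `𝒳` are of the form `w (α_s)`, `w (α_t)` for a
common `w ∈ W`. -/
def IsAP (ρ : W →* ((S →₀ ℝ) ≃ₗ[ℝ] (S →₀ ℝ))) (𝒳 : Set (S →₀ ℝ)) : Prop :=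
  LinearIndependent ℝ ((↑) : 𝒳 → (S →₀ ℝ)) ∧
    ∀ β ∈ 𝒳, ∀ γ ∈ 𝒳, ∃ (w : W) (s t : S),
      ρ w (simpleRoot s) = β ∧ ρ w (simpleRoot t) = γ

/-- `g ∈ W` is a product of `n` elements of `T`. -/
def HasLen (T : Set W) (g : W) (n : ℕ) : Prop :=
  ∃ l : List W, (∀ x ∈ l, x ∈ T) ∧ l.prod = g ∧ l.length = n

/-- `u` has minimal word length (w.r.t. the generating set `T`) in the coset `u·H`. -/
def MinimalInCoset (T : Set W) (H : Subgroup W) (u : W) : Prop :=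
  ∀ h ∈ H, ∀ m, HasLen T (u * h) m → ∃ n ≤ m, HasLen T u n

section Aux

variable {S : Type*} (M : CoxeterMatrix S)

lemma bform_single (s t : S) : bform M (simpleRoot s) (simpleRoot t) = formEntry M s t := by
  have h1 : simpleRoot s = (Finsupp.basisSingleOne : Module.Basis S ℝ (S →₀ ℝ)) s := by
    simp [simpleRoot]
  have h2 : simpleRoot t = (Finsupp.basisSingleOne : Module.Basis S ℝ (S →₀ ℝ)) t := by
    simp [simpleRoot]
  rw [bform, h1, h2, Module.Basis.constr_basis, Module.Basis.constr_basis]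

lemma formEntry_symm (s t : S) : formEntry M s t = formEntry M t s := by
  rw [formEntry, formEntry, M.symmetric s t]

lemma formEntry_self (s : S) : formEntry M s s = 1 := by
  rw [formEntry, M.diagonal]
  norm_num

lemma bform_symm (x y : S →₀ ℝ) : bform M x y = bform M y x := by
  induction x using Finsupp.induction_linear with
  | zero => simp
  | add a b ha hb => simp [map_add, ha, hb]
  | single s c =>
    induction y using Finsupp.induction_linear with
    | zero => simp
    | add a b ha hb => simp [map_add, ha, hb]
    | single t d =>
      have := bform_single M s t
      have := bform_single M t s
      have hs : (Finsupp.single s c : S →₀ ℝ) = c • simpleRoot s := by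
        simp [simpleRoot, Finsupp.smul_single]
      have ht : (Finsupp.single t d : S →₀ ℝ) = d • simpleRoot t := by
        simp [simpleRoot, Finsupp.smul_single]
      rw [hs, ht, map_smul, map_smul]
      simp only [LinearMap.smul_apply, map_smul, smul_eq_mul]
      rw [bform_single, bform_single, formEntry_symm M s t]
      ring
-- Eform: the standard (positive definite) pairing on S →₀ ℝ
def Eform {S : Type*} (x y : S →₀ ℝ) : ℝ := x.sum fun s a => a * y s

variable {S : Type*}

lemma Eform_self_nonneg (x : S →₀ ℝ) : 0 ≤ Eform x x := by
  rw [Eform, Finsupp.sum]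
  exact Finset.sum_nonneg fun s _ => mul_self_nonneg _

lemma Eform_self_eq_zero {x : S →₀ ℝ} (h : Eform x x = 0) : x = 0 := by
  rw [Eform, Finsupp.sum] at h
  ext s
  by_contra hs
  have hmem : s ∈ x.support := Finsupp.mem_support_iff.mpr (by simpa using hs)
  have := Finset.sum_eq_zero_iff_of_nonneg (fun t _ => mul_self_nonneg (x t)) |>.mp h s hmem
  exact hs (by simpa [mul_self_eq_zero] using this)

lemma Eform_add_right (x y z : S →₀ ℝ) : Eform x (y + z) = Eform x y + Eform x z := by
  simp [Eform, Finsupp.sum, Finsupp.add_apply, mul_add, Finset.sum_add_distrib]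

lemma Eform_smul_right (c : ℝ) (x y : S →₀ ℝ) : Eform x (c • y) = c * Eform x y := by
  simp [Eform, Finsupp.sum, Finsupp.smul_apply, Finset.mul_sum, mul_comm, mul_left_comm]

lemma Eform_neg_right (x y : S →₀ ℝ) : Eform x (-y) = - Eform x y := by
  have := Eform_smul_right (-1) x y
  simpa using this

lemma key_nondeg {S W : Type*} [Group W] (M : CoxeterMatrix S)
    (ρ : W →* ((S →₀ ℝ) ≃ₗ[ℝ] (S →₀ ℝ)))
    (G : Subgroup W) (hG : (G : Set W).Finite)
    (𝒵 : Set (S →₀ ℝ)) (rr : (S →₀ ℝ) → W)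
    (hmem : ∀ β ∈ 𝒵, rr β ∈ G)
    (hneg : ∀ β ∈ 𝒵, ρ (rr β) β = -β)
    (hfix : ∀ β ∈ 𝒵, ∀ v, bform M β v = 0 → ρ (rr β) v = v)
    (d : S →₀ ℝ) (hd : d ∈ Submodule.span ℝ 𝒵)
    (horth : ∀ γ ∈ 𝒵, bform M γ d = 0) : d = 0 := by
  classical
  set F := hG.toFinset with hF
  have hmemF : ∀ g, g ∈ F ↔ g ∈ G := fun g => hG.mem_toFinset
  set Bl : (S →₀ ℝ) →ₗ[ℝ] ℝ :=
    { toFun := fun v => ∑ g ∈ F, Eform (ρ g d) (ρ g v)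
      map_add' := by
        intro x y
        simp only [map_add, Eform_add_right, Finset.sum_add_distrib]
      map_smul' := by
        intro c x
        simp only [map_smul, Eform_smul_right, Finset.mul_sum, RingHom.id_apply, smul_eq_mul] } with hBl
  have hBzero : ∀ β ∈ 𝒵, Bl β = 0 := by
    intro β hβ
    have hfixd : ρ (rr β) d = d := hfix β hβ d (horth β hβ)
    have key : Bl β = - Bl β := by
      have h1 : ∑ g ∈ F, Eform (ρ (g * rr β) d) (ρ (g * rr β) β)
          = ∑ g ∈ F, Eform (ρ g d) (ρ g β) := by
        refine Finset.sum_equiv (Equiv.mulRight (rr β)) (fun g => ?_) (fun g _ => rfl)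
        simp only [Equiv.coe_mulRight, hmemF]
        exact (G.mul_mem_cancel_right (hmem β hβ)).symm
      have h2 : ∀ g : W, Eform (ρ (g * rr β) d) (ρ (g * rr β) β)
          = - Eform (ρ g d) (ρ g β) := by
        intro g
        have hab : ∀ (a b : W) (v : S →₀ ℝ), ρ (a * b) v = ρ a (ρ b v) := fun a b v => by
          rw [map_mul]; rfl
        rw [hab, hab, hfixd, hneg β hβ, map_neg, Eform_neg_right]
      calc Bl β = ∑ g ∈ F, Eform (ρ g d) (ρ g β) := rfl
      _ = ∑ g ∈ F, Eform (ρ (g * rr β) d) (ρ (g * rr β) β) := h1.symm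
      _ = ∑ g ∈ F, - Eform (ρ g d) (ρ g β) := by simp only [h2]
      _ = - Bl β := by rw [Finset.sum_neg_distrib]; rfl
    linarith
  have hker : Submodule.span ℝ 𝒵 ≤ LinearMap.ker Bl :=
    Submodule.span_le.mpr fun β hβ => LinearMap.mem_ker.mpr (hBzero β hβ)
  have hBd : Bl d = 0 := hker hd
  have hterms : ∀ g ∈ F, Eform (ρ g d) (ρ g d) = 0 := by
    intro g hg
    exact (Finset.sum_eq_zero_iff_of_nonneg
      (fun g _ => Eform_self_nonneg _)).mp hBd g hg
  have h1F : (1 : W) ∈ F := (hmemF 1).mpr G.one_mem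
  have := hterms 1 h1F
  simp only [map_one] at this
  exact Eform_self_eq_zero (by simpa using this)

lemma rho_mul_apply {S W : Type*} [Group W] (ρ : W →* ((S →₀ ℝ) ≃ₗ[ℝ] (S →₀ ℝ)))
    (a b : W) (v : S →₀ ℝ) : ρ (a * b) v = ρ a (ρ b v) := by rw [map_mul]; rfl

lemma refl_apply {S W : Type*} [Group W] (M : CoxeterMatrix S) (cs : CoxeterSystem M W)
    (ρ : W →* ((S →₀ ℝ) ≃ₗ[ℝ] (S →₀ ℝ)))
    (hρ : ∀ (s : S) (v : S →₀ ℝ),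
      ρ (cs.simple s) v = v - (2 * bform M (simpleRoot s) v) • simpleRoot s)
    (hρform : ∀ (w : W) (x y : S →₀ ℝ), bform M (ρ w x) (ρ w y) = bform M x y)
    (w : W) (s : S) (v : S →₀ ℝ) :
    ρ (w * cs.simple s * w⁻¹) v
      = v - (2 * bform M (ρ w (simpleRoot s)) v) • (ρ w (simpleRoot s)) := by
  have hv : ρ w (ρ w⁻¹ v) = v := by
    rw [← rho_mul_apply, mul_inv_cancel, map_one]; rfl
  rw [rho_mul_apply, rho_mul_apply, hρ, map_sub, map_smul, hv]
  congr 2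
  rw [← hρform w (simpleRoot s) ((ρ w⁻¹) v), hv]

end Aux

/-- Let `𝒴 ⊆ 𝒳 ⊆ Φ` with `𝒳` AP of spherical type and let `u ∈ W_𝒳` have
minimal word length (w.r.t. the generating set `R_𝒳`) in the coset `u·W_𝒴`.  Then `u(𝒴)` is
again AP of spherical type, `W_{u(𝒴)} = u W_𝒴 u⁻¹`, `u (o_𝒴) = o_{u(𝒴)}`, and the action of
`u` restricts to a bijective isometry of `C[𝒴]` onto `C[u(𝒴)]` sending `z (o_𝒴)` to
`(u z u⁻¹) (o_{u(𝒴)})` for every `z ∈ W_𝒴`.  (The points `o_𝒴` and `o_{u(𝒴)}` are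
characterized as the unique vectors of the respective spans pairing to `1` with every root
of `𝒴`, resp. `u(𝒴)`.) -/
theorem statement4
    (M : CoxeterMatrix S) (cs : CoxeterSystem M W)
    (ρ : W →* ((S →₀ ℝ) ≃ₗ[ℝ] (S →₀ ℝ)))
    (hρ : ∀ (s : S) (v : S →₀ ℝ),
      ρ (cs.simple s) v = v - (2 * bform M (simpleRoot s) v) • simpleRoot s)
    (hρinj : Function.Injective ρ)
    (hρform : ∀ (w : W) (x y : S →₀ ℝ), bform M (ρ w x) (ρ w y) = bform M x y)
    (r : (S →₀ ℝ) → W)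
    (hr : ∀ (w : W) (s : S), r (ρ w (simpleRoot s)) = w * cs.simple s * w⁻¹)
    (𝒳 𝒴 : Set (S →₀ ℝ)) (h𝒴𝒳 : 𝒴 ⊆ 𝒳) (h𝒳Φ : 𝒳 ⊆ rootSystem ρ) (hAP : IsAP ρ 𝒳)
    (hsph : ((Subgroup.closure (r '' 𝒳) : Set W)).Finite)
    (u : W) (hu : u ∈ Subgroup.closure (r '' 𝒳))
    (humin : MinimalInCoset (r '' 𝒳) (Subgroup.closure (r '' 𝒴)) u)
    (o𝒴 : S →₀ ℝ) (ho𝒴span : o𝒴 ∈ Submodule.span ℝ 𝒴)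
    (ho𝒴 : ∀ γ ∈ 𝒴, bform M o𝒴 γ = 1)
    (ou𝒴 : S →₀ ℝ) (hou𝒴span : ou𝒴 ∈ Submodule.span ℝ (⇑(ρ u) '' 𝒴))
    (hou𝒴 : ∀ γ ∈ ⇑(ρ u) '' 𝒴, bform M ou𝒴 γ = 1) :
    IsAP ρ (⇑(ρ u) '' 𝒴) ∧
    ((Subgroup.closure (r '' (⇑(ρ u) '' 𝒴)) : Set W)).Finite ∧
    Subgroup.closure (r '' (⇑(ρ u) '' 𝒴)) =
      Subgroup.map (MulAut.conj u).toMonoidHom (Subgroup.closure (r '' 𝒴)) ∧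
    ρ u o𝒴 = ou𝒴 ∧
    (∀ x y : S →₀ ℝ, bform M (ρ u x) (ρ u y) = bform M x y) ∧
    Set.BijOn (⇑(ρ u))
      (convexHull ℝ ((fun z : W => ρ z o𝒴) '' ((Subgroup.closure (r '' 𝒴) : Set W))))
      (convexHull ℝ ((fun z : W => ρ z ou𝒴) ''
        ((Subgroup.closure (r '' (⇑(ρ u) '' 𝒴)) : Set W)))) ∧
    ∀ z ∈ Subgroup.closure (r '' 𝒴), ρ u (ρ z o𝒴) = ρ (u * z * u⁻¹) ou𝒴 := by
  classical
  have hab := rho_mul_apply ρ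
  set G := Subgroup.closure (r '' 𝒳) with hG
  set H := Subgroup.closure (r '' 𝒴) with hH
  set 𝒵 : Set (S →₀ ℝ) := ⇑(ρ u) '' 𝒴 with h𝒵
  have hroot : ∀ β ∈ 𝒳, ∃ (w : W) (s : S), ρ w (simpleRoot s) = β := by
    intro β hβ
    obtain ⟨w, s, t, h1, -⟩ := hAP.2 β hβ β hβ
    exact ⟨w, s, h1⟩
  have hrefl : ∀ (w : W) (s : S) (v : S →₀ ℝ),
      ρ (r (ρ w (simpleRoot s))) v
        = v - (2 * bform M (ρ w (simpleRoot s)) v) • (ρ w (simpleRoot s)) := by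
    intro w s v
    rw [hr]
    exact refl_apply M cs ρ hρ hρform w s v
  have hnorm : ∀ (w : W) (s : S),
      bform M (ρ w (simpleRoot s)) (ρ w (simpleRoot s)) = 1 := by
    intro w s
    rw [hρform, bform_single, formEntry_self]
  have hrconj : ∀ β ∈ 𝒳, r (ρ u β) = u * r β * u⁻¹ := by
    intro β hβ
    obtain ⟨w, s, hws⟩ := hroot β hβ
    rw [← hws, ← hab, hr, hr]
    group
  have hrG : ∀ β ∈ 𝒳, r β ∈ G := fun β hβ =>
    Subgroup.subset_closure (Set.mem_image_of_mem r hβ)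
  have hrZG : ∀ δ ∈ 𝒵, r δ ∈ G := by
    rintro δ ⟨β, hβ, rfl⟩
    rw [hrconj β (h𝒴𝒳 hβ)]
    exact mul_mem (mul_mem hu (hrG β (h𝒴𝒳 hβ))) (inv_mem hu)
  have hZroot : ∀ δ ∈ 𝒵, ∃ (w : W) (s : S), ρ w (simpleRoot s) = δ := by
    rintro δ ⟨β, hβ, rfl⟩
    obtain ⟨w, s, hws⟩ := hroot β (h𝒴𝒳 hβ)
    exact ⟨u * w, s, by rw [hab, hws]⟩
  have hneg : ∀ δ ∈ 𝒵, ρ (r δ) δ = -δ := by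
    intro δ hδ
    obtain ⟨w, s, rfl⟩ := hZroot δ hδ
    rw [hrefl, hnorm]
    module
  have hfix : ∀ δ ∈ 𝒵, ∀ v, bform M δ v = 0 → ρ (r δ) v = v := by
    intro δ hδ v hv
    obtain ⟨w, s, rfl⟩ := hZroot δ hδ
    rw [hrefl, hv]
    simp
  -- Part 3
  have himgr : r '' 𝒵 = ⇑(MulAut.conj u).toMonoidHom '' (r '' 𝒴) := by
    rw [h𝒵, ← Set.image_comp, ← Set.image_comp]
    apply Set.image_congr
    intro β hβ
    simp only [Function.comp_apply, MulEquiv.coe_toMonoidHom, MulAut.conj_apply]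
    exact hrconj β (h𝒴𝒳 hβ)
  have part3 : Subgroup.closure (r '' 𝒵) = Subgroup.map (MulAut.conj u).toMonoidHom H := by
    rw [himgr, MonoidHom.map_closure]
  -- Part 2
  have hHsub : (H : Set W) ⊆ (G : Set W) :=
    Subgroup.closure_mono (Set.image_mono (f := r) h𝒴𝒳)
  have part2 : ((Subgroup.closure (r '' 𝒵) : Set W)).Finite := by
    rw [part3, Subgroup.coe_map]
    exact (hsph.subset hHsub).image _
  -- Part 1
  have part1 : IsAP ρ 𝒵 := by
    constructor
    · have h1 : LinearIndependent ℝ ((↑) : 𝒴 → (S →₀ ℝ)) := linearIndependent_subtype_iff.mpr ((linearIndependent_subtype_iff.mp hAP.1).mono h𝒴𝒳)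
      have h2 := linearIndependent_subtype_iff.mpr (LinearIndepOn.image (linearIndependent_subtype_iff.mp h1) (f := (ρ u : (S →₀ ℝ) →ₗ[ℝ] (S →₀ ℝ)))
        (by simp [LinearEquiv.ker]))
      simpa using h2
    · rintro β' ⟨β, hβ, rfl⟩ γ' ⟨γ, hγ, rfl⟩
      obtain ⟨w, s, t, h1, h2⟩ := hAP.2 β (h𝒴𝒳 hβ) γ (h𝒴𝒳 hγ)
      exact ⟨u * w, s, t, by rw [hab, h1], by rw [hab, h2]⟩
  -- Part 4
  have hGfin : (G : Set W).Finite := hsph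
  have part4 : ρ u o𝒴 = ou𝒴 := by
    rw [← sub_eq_zero]
    apply key_nondeg M ρ G hGfin 𝒵 r hrZG hneg hfix
    · have h1 : ρ u o𝒴 ∈ Submodule.span ℝ 𝒵 := by
        rw [h𝒵]
        have : (⇑(ρ u) '' 𝒴) = (⇑(ρ u : (S →₀ ℝ) →ₗ[ℝ] (S →₀ ℝ)) '' 𝒴) := by simp
        rw [this, Submodule.span_image]
        exact Submodule.mem_map_of_mem ho𝒴span
      exact sub_mem h1 hou𝒴span
    · rintro γ ⟨γ₀, hγ₀, rfl⟩
      rw [map_sub]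
      have e1 : bform M (ρ u γ₀) (ρ u o𝒴) = 1 := by
        rw [hρform, bform_symm]; exact ho𝒴 γ₀ hγ₀
      have e2 : bform M (ρ u γ₀) ou𝒴 = 1 := by
        rw [bform_symm]; exact hou𝒴 _ (Set.mem_image_of_mem _ hγ₀)
      rw [e1, e2, sub_self]
  -- Part 7
  have part7 : ∀ z : W, ρ u (ρ z o𝒴) = ρ (u * z * u⁻¹) ou𝒴 := by
    intro z
    rw [← part4, ← hab, ← hab]
    congr 2
    group
  -- Part 6
  have himg : ⇑(ρ u) '' ((fun z : W => ρ z o𝒴) '' (H : Set W))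
      = (fun z : W => ρ z ou𝒴) '' ((Subgroup.closure (r '' 𝒵) : Set W)) := by
    rw [part3, Subgroup.coe_map, Set.image_image, Set.image_image]
    apply Set.image_congr
    intro z hz
    simp only [MulEquiv.coe_toMonoidHom, MulAut.conj_apply]
    exact part7 z
  have part6 : Set.BijOn (⇑(ρ u))
      (convexHull ℝ ((fun z : W => ρ z o𝒴) '' (H : Set W)))
      (convexHull ℝ ((fun z : W => ρ z ou𝒴) ''
        ((Subgroup.closure (r '' 𝒵) : Set W)))) := by
    have hch : ⇑(ρ u) '' convexHull ℝ ((fun z : W => ρ z o𝒴) '' (H : Set W))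
        = convexHull ℝ ((fun z : W => ρ z ou𝒴) ''
            ((Subgroup.closure (r '' 𝒵) : Set W))) := by
      have h := (ρ u : (S →₀ ℝ) →ₗ[ℝ] (S →₀ ℝ)).image_convexHull
        ((fun z : W => ρ z o𝒴) '' (H : Set W))
      simp only [LinearEquiv.coe_coe] at h
      rw [h, himg]
    exact ⟨Set.mapsTo_iff_image_subset.mpr hch.le, (ρ u).injective.injOn, hch.ge⟩
  exact ⟨part1, part2, part3, part4, fun x y => hρform u x y, part6, fun z _ => part7 z⟩
end
end

section
/- Let Γ be of spherical type, and let u,v ∈ W, X,Y ⊆ S with u (∅,X)-minimal, v (∅,Y)-minimal, and uW_Xu⁻¹ = vW_Yv⁻¹. Then ⟨u(α_s), v(o) − u(o)⟩ = 0 for every s ∈ X; equivalently, every element of the common subgroup uW_Xu⁻¹ = vW_Yv⁻¹ fixes the vector v(o) − u(o). -/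
/-!
Context: `(W, S)` is a Coxeter system for the Coxeter matrix `M` (Mathlib's convention:
the entry `0` encodes `∞`).  `V = ⊕_{s ∈ S} ℝ·α_s` is realized as `S →₀ ℝ` with
`α_s = simpleRoot s`, equipped with the canonical symmetric bilinear form `bform M`.
The canonical faithful form-preserving representation `ρ : W →* GL(V)` and the map
`β ↦ r_β` assigning to each root its reflection are given as data, characterized by
the usual formulas (`hρ`, `hρinj`, `hρform`, `hr` below).
-/

noncomputable section

open scoped Real Pointwise

variable {S W : Type*}

variable [Group W]

section AuxiliaryLemmas

open CoxeterSystem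

lemma bform_single_single (M : CoxeterMatrix S) (s t : S) :
    bform M (simpleRoot s) (simpleRoot t) = formEntry M s t := by
  have h1 : simpleRoot s = (Finsupp.basisSingleOne : Module.Basis S ℝ (S →₀ ℝ)) s := by
    simp [simpleRoot, Finsupp.basisSingleOne]
  have h2 : simpleRoot t = (Finsupp.basisSingleOne : Module.Basis S ℝ (S →₀ ℝ)) t := by
    simp [simpleRoot, Finsupp.basisSingleOne]
  rw [bform, h1, h2, Module.Basis.constr_basis, Module.Basis.constr_basis]

lemma formEntry_comm (M : CoxeterMatrix S) (s t : S) : formEntry M s t = formEntry M t s := by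
  unfold formEntry; rw [M.symmetric s t]

lemma bform_comm (M : CoxeterMatrix S) (x y : S →₀ ℝ) :
    bform M x y = bform M y x := by
  have : bform M = (bform M).flip := by
    apply (Finsupp.basisSingleOne (R := ℝ) (ι := S)).ext
    intro i
    apply (Finsupp.basisSingleOne (R := ℝ) (ι := S)).ext
    intro j
    have hi : (Finsupp.basisSingleOne : Module.Basis S ℝ (S →₀ ℝ)) i = simpleRoot i := by
      simp [simpleRoot, Finsupp.basisSingleOne]
    have hj : (Finsupp.basisSingleOne : Module.Basis S ℝ (S →₀ ℝ)) j = simpleRoot j := by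
      simp [simpleRoot, Finsupp.basisSingleOne]
    rw [LinearMap.flip_apply, hi, hj, bform_single_single, bform_single_single,
      formEntry_comm]
  conv_lhs => rw [this]
  rfl

lemma bform_diag (M : CoxeterMatrix S) (s : S) :
    bform M (simpleRoot s) (simpleRoot s) = 1 := by
  rw [bform_single_single, formEntry, M.diagonal s]
  norm_num

lemma finsupp_eq_sum_simpleRoot (x : S →₀ ℝ) : x = x.sum (fun i c => c • simpleRoot i) := by
  simp [simpleRoot, Finsupp.smul_single, Finsupp.sum_single]

lemma bform_left_sum (M : CoxeterMatrix S) (x y : S →₀ ℝ) :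
    bform M x y = x.sum (fun i c => c * bform M (simpleRoot i) y) := by
  conv_lhs => rw [finsupp_eq_sum_simpleRoot x]
  rw [map_finsuppSum]
  simp [Finsupp.sum]

variable [Group W]

lemma rho_mul (ρ : W →* ((S →₀ ℝ) ≃ₗ[ℝ] (S →₀ ℝ))) (a b : W) (x : S →₀ ℝ) :
    ρ (a * b) x = ρ a (ρ b x) := by rw [map_mul]; rfl

lemma rho_inv_cancel (ρ : W →* ((S →₀ ℝ) ≃ₗ[ℝ] (S →₀ ℝ))) (a : W) (x : S →₀ ℝ) :
    ρ a⁻¹ (ρ a x) = x := by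
  rw [← rho_mul, inv_mul_cancel, map_one]; rfl

lemma rho_cancel_inv (ρ : W →* ((S →₀ ℝ) ≃ₗ[ℝ] (S →₀ ℝ))) (a : W) (x : S →₀ ℝ) :
    ρ a (ρ a⁻¹ x) = x := by
  rw [← rho_mul, mul_inv_cancel, map_one]; rfl

variable {M : CoxeterMatrix S}

lemma root_norm (cs : CoxeterSystem M W) (ρ : W →* ((S →₀ ℝ) ≃ₗ[ℝ] (S →₀ ℝ)))
    (hρform : ∀ (w : W) (x y : S →₀ ℝ), bform M (ρ w x) (ρ w y) = bform M x y)
    (w : W) (s : S) :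
    bform M (ρ w (simpleRoot s)) (ρ w (simpleRoot s)) = 1 := by
  rw [hρform, bform_diag]

lemma root_ne_zero (cs : CoxeterSystem M W) (ρ : W →* ((S →₀ ℝ) ≃ₗ[ℝ] (S →₀ ℝ)))
    (hρform : ∀ (w : W) (x y : S →₀ ℝ), bform M (ρ w x) (ρ w y) = bform M x y)
    (w : W) (s : S) : ρ w (simpleRoot s) ≠ 0 := by
  intro h
  have := root_norm cs ρ hρform w s
  rw [h] at this
  simp at this

lemma rho_conj_refl (cs : CoxeterSystem M W) (ρ : W →* ((S →₀ ℝ) ≃ₗ[ℝ] (S →₀ ℝ)))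
    (hρ : ∀ (s : S) (v : S →₀ ℝ),
      ρ (cs.simple s) v = v - (2 * bform M (simpleRoot s) v) • simpleRoot s)
    (hρform : ∀ (w : W) (x y : S →₀ ℝ), bform M (ρ w x) (ρ w y) = bform M x y)
    (w : W) (s : S) (x : S →₀ ℝ) :
    ρ (w * cs.simple s * w⁻¹) x
      = x - (2 * bform M (ρ w (simpleRoot s)) x) • ρ w (simpleRoot s) := by
  rw [rho_mul, rho_mul, hρ, map_sub, map_smul, rho_cancel_inv]
  congr 2
  have := hρform w (simpleRoot s) (ρ w⁻¹ x)
  rw [rho_cancel_inv] at this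
  rw [this]

lemma rho_simple_self (cs : CoxeterSystem M W) (ρ : W →* ((S →₀ ℝ) ≃ₗ[ℝ] (S →₀ ℝ)))
    (hρ : ∀ (s : S) (v : S →₀ ℝ),
      ρ (cs.simple s) v = v - (2 * bform M (simpleRoot s) v) • simpleRoot s)
    (s : S) : ρ (cs.simple s) (simpleRoot s) = -simpleRoot s := by
  rw [hρ, bform_diag]
  module

lemma aux_supported (cs : CoxeterSystem M W) (ρ : W →* ((S →₀ ℝ) ≃ₗ[ℝ] (S →₀ ℝ)))
    (hρ : ∀ (s : S) (v : S →₀ ℝ),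
      ρ (cs.simple s) v = v - (2 * bform M (simpleRoot s) v) • simpleRoot s)
    (X : Set S) (g : W) (hg : g ∈ Subgroup.closure (cs.simple '' X)) (x : S →₀ ℝ) :
    ρ g x - x ∈ Finsupp.supported ℝ ℝ X := by
  revert x
  induction hg using Subgroup.closure_induction with
  | mem g hgen =>
    obtain ⟨s, hsX, rfl⟩ := hgen
    intro x
    rw [hρ]
    rw [Finsupp.mem_supported]
    have h1 : (x - (2 * bform M (simpleRoot s) x) • simpleRoot s - x)
        = (-(2 * bform M (simpleRoot s) x)) • simpleRoot s := by module
    rw [h1]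
    intro a ha
    simp only [Finset.mem_coe] at ha
    have ha2 := Finsupp.support_smul ha
    have ha3 : a ∈ ({s} : Finset S) := Finsupp.support_single_subset ha2
    simp only [Finset.mem_singleton] at ha3
    rwa [ha3]
  | one => intro x; simp [show ρ 1 x = x by rw [map_one]; rfl]
  | mul g h _ _ pg ph =>
    intro x
    have : ρ (g * h) x - x = (ρ g (ρ h x) - ρ h x) + (ρ h x - x) := by
      rw [rho_mul]; abel
    rw [this]
    exact Submodule.add_mem _ (pg _) (ph _)
  | inv g _ pg =>
    intro x
    have : ρ g⁻¹ x - x = -(ρ g (ρ g⁻¹ x) - ρ g⁻¹ x) := by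
      rw [rho_cancel_inv]; abel
    rw [this]
    exact Submodule.neg_mem _ (pg _)


open CoxeterSystem

variable {M : CoxeterMatrix S}

lemma formEntry_diag (M : CoxeterMatrix S) (s : S) : formEntry M s s = 1 := by
  rw [formEntry, if_neg (by simp : ¬ M s s = 0), M.diagonal s]
  norm_num

lemma aux_alt_apply (cs : CoxeterSystem M W) (ρ : W →* ((S →₀ ℝ) ≃ₗ[ℝ] (S →₀ ℝ)))
    (hρ : ∀ (s : S) (v : S →₀ ℝ),
      ρ (cs.simple s) v = v - (2 * bform M (simpleRoot s) v) • simpleRoot s)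
    (s t : S) (x y : ℕ → ℝ) (hx0 : x 0 = 1) (hy0 : y 0 = 0)
    (hrec : ∀ k, x (k+1) = -(y k) - 2 * formEntry M s t * x k ∧ y (k+1) = x k) :
    ∀ k, ρ (cs.wordProd (alternatingWord s t k)) (simpleRoot s)
      = if Even k then x k • simpleRoot s + y k • simpleRoot t
        else y k • simpleRoot s + x k • simpleRoot t := by
  intro k
  induction k with
  | zero =>
    simp only [alternatingWord, wordProd_nil, map_one, if_pos (Even.zero), hx0, hy0]
    have : (1 : (S →₀ ℝ) ≃ₗ[ℝ] (S →₀ ℝ)) (simpleRoot s) = simpleRoot s := rfl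
    rw [this]
    module
  | succ k ih =>
    rw [alternatingWord_succ', wordProd_cons, rho_mul, ih]
    rcases Nat.even_or_odd k with he | ho
    · have hne : ¬ Even (k+1) := by simp [Nat.even_add_one, he]
      rw [if_pos he, if_pos he, if_neg hne]
      rw [hρ t]
      have hb : bform M (simpleRoot t) (x k • simpleRoot s + y k • simpleRoot t)
          = x k * formEntry M s t + y k := by
        simp only [map_add, map_smul, smul_eq_mul, bform_single_single]
        rw [formEntry_diag, formEntry_comm M t s]
        ring
      rw [hb, (hrec k).1, (hrec k).2]
      module
    · have hko : ¬ Even k := Nat.not_even_iff_odd.mpr ho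
      have he1 : Even (k+1) := Nat.even_add_one.mpr hko
      rw [if_neg hko, if_neg hko, if_pos he1]
      rw [hρ s]
      have hb : bform M (simpleRoot s) (y k • simpleRoot s + x k • simpleRoot t)
          = y k + x k * formEntry M s t := by
        simp only [map_add, map_smul, smul_eq_mul, bform_single_single]
        rw [formEntry_diag]
        ring
      rw [hb, (hrec k).1, (hrec k).2]
      module

lemma aux_alt_nonneg (cs : CoxeterSystem M W) (ρ : W →* ((S →₀ ℝ) ≃ₗ[ℝ] (S →₀ ℝ)))
    (hρ : ∀ (s : S) (v : S →₀ ℝ),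
      ρ (cs.simple s) v = v - (2 * bform M (simpleRoot s) v) • simpleRoot s)
    (s t : S) (hst : s ≠ t) (k : ℕ) (hk : M s t = 0 ∨ k + 1 ≤ M s t) :
    ∃ a b : ℝ, 0 ≤ a ∧ 0 ≤ b ∧
      ρ (cs.wordProd (alternatingWord s t k)) (simpleRoot s)
        = a • simpleRoot s + b • simpleRoot t := by
  rcases hk with h0 | hle
  · -- infinite case: x k = k+1, y k = k
    have hc : formEntry M s t = -1 := by rw [formEntry, if_pos h0]
    have := aux_alt_apply cs ρ hρ s t (fun k => (k : ℝ) + 1) (fun k => (k : ℝ))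
      (by norm_num) (by norm_num)
      (by
        intro k
        rw [hc]
        refine ⟨?_, ?_⟩ <;> · beta_reduce; push_cast; ring) k
    rcases Nat.even_or_odd k with he | ho
    · rw [if_pos he] at this
      exact ⟨_, _, by positivity, by positivity, this⟩
    · rw [if_neg (Nat.not_even_iff_odd.mpr ho)] at this
      exact ⟨_, _, by positivity, by positivity, this⟩
  · -- finite case
    have hm0 : M s t ≠ 0 := by omega
    have hm1 : M s t ≠ 1 := M.off_diagonal s t hst
    have hm2 : 2 ≤ M s t := by omega
    set m : ℕ := M s t with hm
    have hmpos : (0:ℝ) < m := by exact_mod_cast Nat.pos_of_ne_zero hm0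
    set θ : ℝ := Real.pi / m with hθ
    have hθpos : 0 < θ := div_pos Real.pi_pos hmpos
    have hθle : θ ≤ Real.pi / 2 := by
      rw [hθ]
      apply div_le_div_of_nonneg_left Real.pi_pos.le (by norm_num)
      exact_mod_cast hm2
    have hsinpos : 0 < Real.sin θ :=
      Real.sin_pos_of_pos_of_lt_pi hθpos (lt_of_le_of_lt hθle (by linarith [Real.pi_pos]))
    have hc : formEntry M s t = -Real.cos θ := by rw [formEntry, if_neg hm0]
    have key := aux_alt_apply cs ρ hρ s t
      (fun k => Real.sin ((k + 1) * θ) / Real.sin θ)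
      (fun k => Real.sin (k * θ) / Real.sin θ)
      (by
        beta_reduce
        norm_num
        exact ne_of_gt hsinpos)
      (by beta_reduce; norm_num)
      (by
        intro k
        refine ⟨?_, ?_⟩
        · beta_reduce
          rw [hc]
          push_cast
          rw [div_eq_iff (ne_of_gt hsinpos)]
          have h1 : ((k:ℝ) + 1 + 1) * θ = ((k:ℝ)+1) * θ + θ := by ring
          have h2 : (k:ℝ) * θ = ((k:ℝ)+1) * θ - θ := by ring
          rw [h1, h2, Real.sin_add, Real.sin_sub]
          field_simp
          ring
        · beta_reduce; push_cast; ring) k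
    have hnn : ∀ j : ℕ, j ≤ m → 0 ≤ Real.sin (j * θ) / Real.sin θ := by
      intro j hj
      apply div_nonneg _ hsinpos.le
      apply Real.sin_nonneg_of_nonneg_of_le_pi
      · positivity
      · rw [hθ, ← mul_div_assoc, div_le_iff₀ hmpos]
        have : (j : ℝ) ≤ m := by exact_mod_cast hj
        nlinarith [Real.pi_pos]
    have hnn1 : 0 ≤ Real.sin (((k:ℝ)+1) * θ) / Real.sin θ := by
      have := hnn (k+1) (by omega)
      push_cast at this
      exact this
    have hnn0 : 0 ≤ Real.sin ((k:ℝ) * θ) / Real.sin θ := hnn k (by omega)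
    rcases Nat.even_or_odd k with he | ho
    · rw [if_pos he] at key
      exact ⟨_, _, hnn1, hnn0, key⟩
    · rw [if_neg (Nat.not_even_iff_odd.mpr ho)] at key
      exact ⟨_, _, hnn0, hnn1, key⟩


/-- Decomposition of `w` into a part with no `{s,t}` right descents times an
alternating word in `s, t`. -/
lemma auxP (cs : CoxeterSystem M W) (s t : S) :
    ∀ (n : ℕ) (w : W), cs.length w = n →
    ∃ (p : W) (i j : S) (k : ℕ), ((i = s ∧ j = t) ∨ (i = t ∧ j = s)) ∧
      w = p * cs.wordProd (alternatingWord i j k) ∧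
      cs.length w = cs.length p + k ∧
      ¬cs.IsRightDescent p s ∧ ¬cs.IsRightDescent p t ∧
      (1 ≤ k → cs.IsRightDescent w j) := by
  intro n
  induction n using Nat.strong_induction_on with
  | _ n IH =>
    intro w hw
    by_cases hds : cs.IsRightDescent w s ∨ cs.IsRightDescent w t
    · -- some descent j₀
      obtain ⟨j₀, i₀, hd, hor⟩ : ∃ j₀ i₀, cs.IsRightDescent w j₀ ∧
          ((i₀ = s ∧ j₀ = t) ∨ (i₀ = t ∧ j₀ = s)) := by
        rcases hds with h | h
        · exact ⟨s, t, h, Or.inr ⟨rfl, rfl⟩⟩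
        · exact ⟨t, s, h, Or.inl ⟨rfl, rfl⟩⟩
      set w' := w * cs.simple j₀ with hw'
      have hlen' : cs.length w' + 1 = cs.length w := (cs.isRightDescent_iff).mp hd
      have hlt : cs.length w' < n := by omega
      obtain ⟨p, i, j, k, hor', heq, hadd, hps, hpt, hdesc⟩ :=
        IH (cs.length w') hlt w' rfl
      have hwrec : w = w' * cs.simple j₀ := by
        rw [hw', mul_assoc, cs.simple_mul_simple_self, mul_one]
      rcases Nat.eq_zero_or_pos k with hk0 | hk1
      · -- k = 0 : w' = p
        subst hk0
        have hp : w' = p := by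
          simpa [alternatingWord, wordProd_nil] using heq
        refine ⟨p, i₀, j₀, 1, hor, ?_, ?_, hps, hpt, fun _ => hd⟩
        · have : alternatingWord i₀ j₀ 1 = [j₀] := rfl
          rw [this, hwrec, hp]
          simp [wordProd]
        · omega
      · -- k ≥ 1
        have hjdesc : cs.IsRightDescent w' j := hdesc hk1
        have hjj₀ : j ≠ j₀ := by
          intro h
          subst h
          have : ¬ cs.IsRightDescent w' j := by
            rw [cs.isRightDescent_iff_not_isRightDescent_mul] at hd
            rwa [← hw'] at hd
          exact this hjdesc
        -- orientation: i = j₀, and the new word is aw j j₀ (k+1)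
        have hij : i = j₀ ∧ ((j = s ∧ j₀ = t) ∨ (j = t ∧ j₀ = s)) := by
          rcases hor' with ⟨hi, hj⟩ | ⟨hi, hj⟩ <;> rcases hor with ⟨hi₀, hj₀⟩ | ⟨hi₀, hj₀⟩ <;>
            subst_vars <;>
            first
              | exact absurd rfl hjj₀
              | exact ⟨rfl, Or.inl ⟨rfl, rfl⟩⟩
              | exact ⟨rfl, Or.inr ⟨rfl, rfl⟩⟩
        obtain ⟨hi, hor''⟩ := hij
        refine ⟨p, j, j₀, k + 1, ?_, ?_, ?_, hps, hpt, fun _ => hd⟩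
        · tauto
        · rw [hwrec, heq, alternatingWord_succ, wordProd_concat, hi, mul_assoc]
        · omega
    · push_neg at hds
      exact ⟨w, s, t, 0, Or.inl ⟨rfl, rfl⟩,
        by simp [alternatingWord, wordProd_nil], by omega, hds.1, hds.2, by omega⟩

/-- Key positivity: if `s` is not a right descent of `w`, then `w(α_s)` is a
nonnegative combination of simple roots. -/
lemma auxD (cs : CoxeterSystem M W) (ρ : W →* ((S →₀ ℝ) ≃ₗ[ℝ] (S →₀ ℝ)))
    (hρ : ∀ (s : S) (v : S →₀ ℝ),
      ρ (cs.simple s) v = v - (2 * bform M (simpleRoot s) v) • simpleRoot s) :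
    ∀ (n : ℕ) (w : W), cs.length w = n → ∀ (s : S), ¬cs.IsRightDescent w s →
      ∀ i, 0 ≤ ρ w (simpleRoot s) i := by
  intro n
  induction n using Nat.strong_induction_on with
  | _ n IH =>
    intro w hw s hs i
    classical
    rcases eq_or_ne w 1 with rfl | hne
    · rw [map_one]
      have : (1 : (S →₀ ℝ) ≃ₗ[ℝ] (S →₀ ℝ)) (simpleRoot s) = simpleRoot s := rfl
      rw [this, simpleRoot, Finsupp.single_apply]
      split <;> norm_num
    · obtain ⟨t, ht⟩ := cs.exists_rightDescent_of_ne_one hne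
      have hst : s ≠ t := by rintro rfl; exact hs ht
      obtain ⟨p, i', j, k, hor, heq, hadd, hps, hpt, hdesc⟩ :=
        auxP cs s t (cs.length w) w rfl
      have hk1 : 1 ≤ k := by
        rcases Nat.eq_zero_or_pos k with h0 | h1
        · exfalso
          subst h0
          have hp : w = p := by simpa [alternatingWord, wordProd_nil] using heq
          exact hpt (hp ▸ ht)
        · exact h1
      have hj : t = j ∧ s = i' := by
        have hwj := hdesc hk1
        rcases hor with ⟨hi, hjj⟩ | ⟨hi, hjj⟩
        · exact ⟨hjj.symm, hi.symm⟩
        · exfalso; subst hjj; exact hs hwj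
      obtain ⟨hjt, his⟩ := hj
      subst hjt
      subst his
      -- d := the alternating word part
      set d := cs.wordProd (alternatingWord s t k) with hd
      have hld : cs.length d = k := by
        have h1 : cs.length d ≤ k := by
          have := cs.length_wordProd_le (alternatingWord s t k)
          rwa [length_alternatingWord] at this
        have h2 : cs.length w ≤ cs.length p + cs.length d := by
          rw [heq]; exact cs.length_mul_le p d
        omega
      -- bound on k
      have hkbound : M s t = 0 ∨ k + 1 ≤ M s t := by
        rcases eq_or_ne (M s t) 0 with h0 | h0
        · exact Or.inl h0
        · right
          rcases lt_or_ge k (M s t) with hlt | hge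
          · omega
          rcases eq_or_ne k (M s t) with hkm | hkm
          · -- k = m : contradiction with ¬descent s
            exfalso
            have hm2 : 1 ≤ M s t := Nat.one_le_iff_ne_zero.mpr h0
            have hsymm : M t s = M s t := M.symmetric t s
            have hflip : d = cs.wordProd (alternatingWord t s (M s t)) := by
              have h := cs.prod_alternatingWord_eq_prod_alternatingWord_sub t s (M t s)
                (by omega)
              have h2m : M t s * 2 - M t s = M t s := by omega
              rw [h2m, hsymm] at h
              rw [hd, hkm, h]
            have hsplit : alternatingWord t s (M s t) =
                (alternatingWord s t (M s t - 1)).concat s := by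
              have h : M s t = (M s t - 1) + 1 := by omega
              conv_lhs => rw [h, alternatingWord_succ]
            have hws : w * cs.simple s = p * cs.wordProd (alternatingWord s t (M s t - 1)) := by
              rw [heq, hflip, hsplit, wordProd_concat, mul_assoc, mul_assoc,
                cs.simple_mul_simple_self, mul_one]
            have hlenws : cs.length (w * cs.simple s) ≤ cs.length p + (M s t - 1) := by
              rw [hws]
              calc cs.length (p * cs.wordProd (alternatingWord s t (M s t - 1)))
                  ≤ cs.length p + cs.length (cs.wordProd (alternatingWord s t (M s t - 1))) :=
                    cs.length_mul_le _ _
                _ ≤ cs.length p + (M s t - 1) := by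
                    have := cs.length_wordProd_le (alternatingWord s t (M s t - 1))
                    rw [length_alternatingWord] at this
                    omega
            have : cs.IsRightDescent w s := by
              unfold CoxeterSystem.IsRightDescent
              omega
            exact hs this
          · -- k > m : alternating word not reduced
            exfalso
            have : ¬ cs.IsReduced (alternatingWord s t k) :=
              cs.not_isReduced_alternatingWord s t h0 (by omega)
            apply this
            unfold CoxeterSystem.IsReduced
            rw [length_alternatingWord, ← hd, hld]
      obtain ⟨a, b, ha, hb, habd⟩ := aux_alt_nonneg cs ρ hρ s t hst k hkbound
      have hwd : ρ w (simpleRoot s) = a • ρ p (simpleRoot s) + b • ρ p (simpleRoot t) := by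
        rw [heq, rho_mul, hd, habd, map_add, map_smul, map_smul]
      rw [hwd]
      have hlp : cs.length p < n := by omega
      have h1 := IH (cs.length p) hlp p rfl s hps i
      have h2 := IH (cs.length p) hlp p rfl t hpt i
      simp only [Finsupp.add_apply, Finsupp.smul_apply, smul_eq_mul]
      positivity


/-- Dichotomy: every root is nonnegative or nonpositive. -/
lemma auxDich (cs : CoxeterSystem M W) (ρ : W →* ((S →₀ ℝ) ≃ₗ[ℝ] (S →₀ ℝ)))
    (hρ : ∀ (s : S) (v : S →₀ ℝ),
      ρ (cs.simple s) v = v - (2 * bform M (simpleRoot s) v) • simpleRoot s)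
    (w : W) (s : S) :
    (∀ i, 0 ≤ ρ w (simpleRoot s) i) ∨ (∀ i, ρ w (simpleRoot s) i ≤ 0) := by
  by_cases hd : cs.IsRightDescent w s
  · right
    have hne : ¬ cs.IsRightDescent (w * cs.simple s) s :=
      (cs.isRightDescent_iff_not_isRightDescent_mul).mp hd
    have h := auxD cs ρ hρ (cs.length (w * cs.simple s)) (w * cs.simple s) rfl s hne
    have hval : ρ w (simpleRoot s) = -ρ (w * cs.simple s) (simpleRoot s) := by
      have : w = (w * cs.simple s) * cs.simple s := by
        rw [mul_assoc, cs.simple_mul_simple_self, mul_one]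
      conv_lhs => rw [this]
      rw [rho_mul, rho_simple_self cs ρ hρ, map_neg]
    intro i
    rw [hval]
    simp only [Finsupp.coe_neg, Pi.neg_apply, neg_nonpos]
    exact h i
  · exact Or.inl (auxD cs ρ hρ (cs.length w) w rfl s hd)

/-- The sum of coordinates of `x` equals `⟨x, o⟩`. -/
lemma aux_sum_coords (M : CoxeterMatrix S) (o : S →₀ ℝ)
    (ho : ∀ t : S, bform M o (simpleRoot t) = 1) (x : S →₀ ℝ) :
    bform M x o = x.sum (fun _ c => c) := by
  rw [bform_left_sum]
  apply Finsupp.sum_congr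
  intro i _
  rw [bform_comm, ho i, mul_one]

/-- Every nonnegative root has coordinate sum at least 1. -/
lemma auxE (cs : CoxeterSystem M W) [Finite W] (ρ : W →* ((S →₀ ℝ) ≃ₗ[ℝ] (S →₀ ℝ)))
    (hρ : ∀ (s : S) (v : S →₀ ℝ),
      ρ (cs.simple s) v = v - (2 * bform M (simpleRoot s) v) • simpleRoot s)
    (hρform : ∀ (w : W) (x y : S →₀ ℝ), bform M (ρ w x) (ρ w y) = bform M x y)
    (o : S →₀ ℝ) (ho : ∀ t : S, bform M o (simpleRoot t) = 1) (s : S) :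
    ∀ (n : ℕ) (w : W),
      ({δ ∈ Set.range (fun w' : W => ρ w' (simpleRoot s)) |
        bform M δ o < bform M (ρ w (simpleRoot s)) o}).ncard < n →
      (∀ i, 0 ≤ ρ w (simpleRoot s) i) → 1 ≤ bform M (ρ w (simpleRoot s)) o := by
  classical
  have hRfin : (Set.range (fun w' : W => ρ w' (simpleRoot s))).Finite :=
    Set.finite_range _
  intro n
  induction n using Nat.strong_induction_on with
  | _ n IHn =>
    intro w hcard hnn
    set γ := ρ w (simpleRoot s) with hγ
    have hnorm : bform M γ γ = 1 := root_norm cs ρ hρform w s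
    have hsum : γ.sum (fun i c => c * bform M (simpleRoot i) γ) = 1 := by
      rw [← bform_left_sum, hnorm]
    have hex : ∃ r, 0 < γ r * bform M (simpleRoot r) γ := by
      by_contra hcon
      push_neg at hcon
      have : γ.sum (fun i c => c * bform M (simpleRoot i) γ) ≤ 0 := by
        apply Finset.sum_nonpos
        intro i _
        exact hcon i
      linarith
    obtain ⟨r, hr⟩ := hex
    have hγr : 0 < γ r := by
      rcases lt_or_ge 0 (γ r) with h | h
      · exact h
      · exfalso
        have : γ r = 0 := le_antisymm h (hnn r)
        rw [this, zero_mul] at hr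
        exact lt_irrefl 0 hr
    have hbr : 0 < bform M (simpleRoot r) γ := by
      by_contra hcon
      push_neg at hcon
      nlinarith
    by_cases hsupp : ∀ i, i ≠ r → γ i = 0
    · -- γ = γ r • α_r and γ r = 1
      have hγeq : γ = γ r • simpleRoot r := by
        ext i
        rcases eq_or_ne i r with rfl | hne
        · simp [simpleRoot, Finsupp.single_apply]
        · simp [simpleRoot, hsupp i hne, Finsupp.single_eq_of_ne' (Ne.symm hne)]
      have h1 : bform M γ γ = γ r * γ r := by
        conv_lhs => rw [hγeq]
        simp only [map_smul, LinearMap.smul_apply, smul_eq_mul, bform_diag]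
        ring
      have hγr1 : γ r = 1 := by nlinarith
      have : bform M γ o = 1 := by
        conv_lhs => rw [hγeq]
        simp only [map_smul, LinearMap.smul_apply, smul_eq_mul]
        rw [bform_comm, ho r, hγr1, mul_one]
      rw [this]
    · push_neg at hsupp
      obtain ⟨i₀, hi₀ne, hi₀⟩ := hsupp
      set δ := ρ (cs.simple r * w) (simpleRoot s) with hδ
      have hδeq : δ = γ - (2 * bform M (simpleRoot r) γ) • simpleRoot r := by
        rw [hδ, rho_mul, hρ, hγ]
      have hsingle : (simpleRoot r : S →₀ ℝ) i₀ = 0 := by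
        rw [simpleRoot]
        exact Finsupp.single_eq_of_ne' (Ne.symm hi₀ne)
      have hδi₀ : 0 < δ i₀ := by
        rw [hδeq]
        simp only [Finsupp.coe_sub, Pi.sub_apply, Finsupp.smul_apply, smul_eq_mul, hsingle,
          mul_zero, sub_zero]
        exact lt_of_le_of_ne (hnn i₀) (Ne.symm hi₀)
      have hδnn : ∀ i, 0 ≤ δ i := by
        rcases auxDich cs ρ hρ (cs.simple r * w) s with h | h
        · exact h
        · exfalso
          have := h i₀
          rw [← hδ] at this
          linarith
      have hro : bform M (simpleRoot r) o = 1 := by rw [bform_comm, ho r]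
      have hδo : bform M δ o = bform M γ o - 2 * bform M (simpleRoot r) γ := by
        rw [hδeq, map_sub, LinearMap.sub_apply, map_smul, LinearMap.smul_apply,
          smul_eq_mul, hro, mul_one]
      have hlt : bform M δ o < bform M γ o := by rw [hδo]; linarith
      set A : (S →₀ ℝ) → Set (S →₀ ℝ) := fun m =>
        {x ∈ Set.range (fun w' : W => ρ w' (simpleRoot s)) | bform M x o < bform M m o}
        with hA
      have hss : A δ ⊂ A γ := by
        constructor
        · rintro x ⟨hx1, hx2⟩
          exact ⟨hx1, lt_trans hx2 hlt⟩
        · intro hsub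
          have hδmem : δ ∈ A γ := ⟨⟨cs.simple r * w, rfl⟩, hlt⟩
          have : δ ∈ A δ := hsub hδmem
          exact lt_irrefl _ this.2
      have hAfin : (A γ).Finite := hRfin.subset (Set.sep_subset _ _)
      have hcard2 : (A δ).ncard < (A γ).ncard := Set.ncard_lt_ncard hss hAfin
      have hrec := IHn ((A γ).ncard) hcard (cs.simple r * w) (by rw [← hδ]; exact hcard2)
        (by rw [← hδ]; exact hδnn)
      rw [← hδ, hδo] at hrec
      linarith


end AuxiliaryLemmas

open CoxeterSystem

/-- Let `Γ` be of spherical type, `u, v ∈ W`, `X, Y ⊆ S` with `u`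
`(∅,X)`-minimal, `v` `(∅,Y)`-minimal and `u W_X u⁻¹ = v W_Y v⁻¹`.  Then
`⟨u(α_s), v(o) − u(o)⟩ = 0` for every `s ∈ X`; equivalently, every element of the common
subgroup `u W_X u⁻¹ = v W_Y v⁻¹` fixes the vector `v(o) − u(o)`. -/
theorem statement12
    (M : CoxeterMatrix S) (cs : CoxeterSystem M W) [Finite W]
    (ρ : W →* ((S →₀ ℝ) ≃ₗ[ℝ] (S →₀ ℝ)))
    (hρ : ∀ (s : S) (v : S →₀ ℝ),
      ρ (cs.simple s) v = v - (2 * bform M (simpleRoot s) v) • simpleRoot s)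
    (hρinj : Function.Injective ρ)
    (hρform : ∀ (w : W) (x y : S →₀ ℝ), bform M (ρ w x) (ρ w y) = bform M x y)
    (o : S →₀ ℝ) (ho : ∀ t : S, bform M o (simpleRoot t) = 1)
    (u v : W) (X Y : Set S)
    (humin : ∀ g ∈ Subgroup.closure (cs.simple '' X), cs.length u ≤ cs.length (u * g))
    (hvmin : ∀ g ∈ Subgroup.closure (cs.simple '' Y), cs.length v ≤ cs.length (v * g))
    (hconj : Subgroup.map (MulAut.conj u).toMonoidHom (Subgroup.closure (cs.simple '' X)) =
      Subgroup.map (MulAut.conj v).toMonoidHom (Subgroup.closure (cs.simple '' Y))) :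
    (∀ s ∈ X, bform M (ρ u (simpleRoot s)) (ρ v o - ρ u o) = 0) ∧
    (∀ g ∈ Subgroup.map (MulAut.conj u).toMonoidHom (Subgroup.closure (cs.simple '' X)),
      ρ g (ρ v o - ρ u o) = ρ v o - ρ u o) := by
  classical
  -- non-descent facts from minimality
  have huds : ∀ s ∈ X, ¬cs.IsRightDescent u s := by
    intro s hs hd
    have hmem : cs.simple s ∈ Subgroup.closure (cs.simple '' X) :=
      Subgroup.subset_closure ⟨s, hs, rfl⟩
    have h1 := humin _ hmem
    unfold CoxeterSystem.IsRightDescent at hd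
    omega
  have hvds : ∀ t ∈ Y, ¬cs.IsRightDescent v t := by
    intro t ht hd
    have hmem : cs.simple t ∈ Subgroup.closure (cs.simple '' Y) :=
      Subgroup.subset_closure ⟨t, ht, rfl⟩
    have h1 := hvmin _ hmem
    unfold CoxeterSystem.IsRightDescent at hd
    omega
  have hUnn : ∀ s ∈ X, ∀ i, 0 ≤ ρ u (simpleRoot s) i :=
    fun s hs => auxD cs ρ hρ (cs.length u) u rfl s (huds s hs)
  have hVnn : ∀ t ∈ Y, ∀ i, 0 ≤ ρ v (simpleRoot t) i :=
    fun t ht => auxD cs ρ hρ (cs.length v) v rfl t (hvds t ht)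
  -- moving the conjugated reflections across
  have hXtoY : ∀ s ∈ X, v⁻¹ * (u * cs.simple s * u⁻¹) * v ∈
      Subgroup.closure (cs.simple '' Y) := by
    intro s hs
    have h1 : u * cs.simple s * u⁻¹ ∈
        Subgroup.map (MulAut.conj u).toMonoidHom (Subgroup.closure (cs.simple '' X)) := by
      refine ⟨cs.simple s, Subgroup.subset_closure ⟨s, hs, rfl⟩, ?_⟩
      simp [MulAut.conj_apply]
    rw [hconj] at h1
    obtain ⟨h, hh, hhe⟩ := h1
    have he2 : v * h * v⁻¹ = u * cs.simple s * u⁻¹ := by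
      simpa [MulAut.conj_apply] using hhe
    have : v⁻¹ * (u * cs.simple s * u⁻¹) * v = h := by
      rw [← he2]; group
    rw [this]; exact hh
  have hYtoX : ∀ t ∈ Y, u⁻¹ * (v * cs.simple t * v⁻¹) * u ∈
      Subgroup.closure (cs.simple '' X) := by
    intro t ht
    have h1 : v * cs.simple t * v⁻¹ ∈
        Subgroup.map (MulAut.conj v).toMonoidHom (Subgroup.closure (cs.simple '' Y)) := by
      refine ⟨cs.simple t, Subgroup.subset_closure ⟨t, ht, rfl⟩, ?_⟩
      simp [MulAut.conj_apply]
    rw [← hconj] at h1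
    obtain ⟨h, hh, hhe⟩ := h1
    have he2 : u * h * u⁻¹ = v * cs.simple t * v⁻¹ := by
      simpa [MulAut.conj_apply] using hhe
    have : u⁻¹ * (v * cs.simple t * v⁻¹) * u = h := by
      rw [← he2]; group
    rw [this]; exact hh
  -- the transported roots are supported on the other index set
  have hβsupp : ∀ s ∈ X, (ρ (v⁻¹ * u) (simpleRoot s)) ∈ Finsupp.supported ℝ ℝ Y := by
    intro s hs
    set β := ρ (v⁻¹ * u) (simpleRoot s) with hβ
    have hq : v⁻¹ * (u * cs.simple s * u⁻¹) * v
        = (v⁻¹ * u) * cs.simple s * (v⁻¹ * u)⁻¹ := by group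
    have hββ : bform M β β = 1 := root_norm cs ρ hρform (v⁻¹ * u) s
    have hval : ρ (v⁻¹ * (u * cs.simple s * u⁻¹) * v) β - β = (-2 : ℝ) • β := by
      rw [hq, rho_conj_refl cs ρ hρ hρform (v⁻¹ * u) s β, ← hβ, hββ]
      module
    have hmem := aux_supported cs ρ hρ Y _ (hXtoY s hs) β
    rw [hval] at hmem
    have : β = (-(1:ℝ)/2) • ((-2:ℝ) • β) := by module
    rw [this]
    exact Submodule.smul_mem _ _ hmem
  have hγsupp : ∀ t ∈ Y, (ρ (u⁻¹ * v) (simpleRoot t)) ∈ Finsupp.supported ℝ ℝ X := by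
    intro t ht
    set β := ρ (u⁻¹ * v) (simpleRoot t) with hβ
    have hq : u⁻¹ * (v * cs.simple t * v⁻¹) * u
        = (u⁻¹ * v) * cs.simple t * (u⁻¹ * v)⁻¹ := by group
    have hββ : bform M β β = 1 := root_norm cs ρ hρform (u⁻¹ * v) t
    have hval : ρ (u⁻¹ * (v * cs.simple t * v⁻¹) * u) β - β = (-2 : ℝ) • β := by
      rw [hq, rho_conj_refl cs ρ hρ hρform (u⁻¹ * v) t β, ← hβ, hββ]
      module
    have hmem := aux_supported cs ρ hρ X _ (hYtoX t ht) β
    rw [hval] at hmem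
    have : β = (-(1:ℝ)/2) • ((-2:ℝ) • β) := by module
    rw [this]
    exact Submodule.smul_mem _ _ hmem
  -- positivity of transported roots
  have hβnn : ∀ s ∈ X, ∀ i, 0 ≤ ρ (v⁻¹ * u) (simpleRoot s) i := by
    intro s hs
    rcases auxDich cs ρ hρ (v⁻¹ * u) s with h | h
    · exact h
    · exfalso
      set β := ρ (v⁻¹ * u) (simpleRoot s) with hβ
      have hvβ : ρ v β = ρ u (simpleRoot s) := by
        rw [hβ, ← rho_mul]
        congr 2
        group
      have hsupβ : ↑β.support ⊆ Y := Finsupp.mem_supported _ _ |>.mp (hβsupp s hs)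
      have hexp : ρ v β = β.sum (fun t c => c • ρ v (simpleRoot t)) := by
        conv_lhs => rw [finsupp_eq_sum_simpleRoot β]
        rw [map_finsuppSum]
        apply Finsupp.sum_congr
        intro t _
        rw [map_smul]
      have hle : ∀ i, ρ u (simpleRoot s) i ≤ 0 := by
        intro i
        rw [← hvβ, hexp, Finsupp.sum_apply]
        apply Finset.sum_nonpos
        intro t htmem
        have htY : t ∈ Y := hsupβ htmem
        have h1 : β t ≤ 0 := h t
        have h2 : 0 ≤ ρ v (simpleRoot t) i := hVnn t htY i
        simp only [Finsupp.smul_apply, smul_eq_mul]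
        exact mul_nonpos_of_nonpos_of_nonneg h1 h2
      have hzero : ρ u (simpleRoot s) = 0 := by
        ext i
        exact le_antisymm (hle i) (hUnn s hs i)
      exact root_ne_zero cs ρ hρform u s hzero
  have hγnn : ∀ t ∈ Y, ∀ i, 0 ≤ ρ (u⁻¹ * v) (simpleRoot t) i := by
    intro t ht
    rcases auxDich cs ρ hρ (u⁻¹ * v) t with h | h
    · exact h
    · exfalso
      set β := ρ (u⁻¹ * v) (simpleRoot t) with hβ
      have hvβ : ρ u β = ρ v (simpleRoot t) := by
        rw [hβ, ← rho_mul]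
        congr 2
        group
      have hsupβ : ↑β.support ⊆ X := Finsupp.mem_supported _ _ |>.mp (hγsupp t ht)
      have hexp : ρ u β = β.sum (fun r c => c • ρ u (simpleRoot r)) := by
        conv_lhs => rw [finsupp_eq_sum_simpleRoot β]
        rw [map_finsuppSum]
        apply Finsupp.sum_congr
        intro r _
        rw [map_smul]
      have hle : ∀ i, ρ v (simpleRoot t) i ≤ 0 := by
        intro i
        rw [← hvβ, hexp, Finsupp.sum_apply]
        apply Finset.sum_nonpos
        intro r hrmem
        have hrX : r ∈ X := hsupβ hrmem
        have h1 : β r ≤ 0 := h r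
        have h2 : 0 ≤ ρ u (simpleRoot r) i := hUnn r hrX i
        simp only [Finsupp.smul_apply, smul_eq_mul]
        exact mul_nonpos_of_nonpos_of_nonneg h1 h2
      have hzero : ρ v (simpleRoot t) = 0 := by
        ext i
        exact le_antisymm (hle i) (hVnn t ht i)
      exact root_ne_zero cs ρ hρform v t hzero
  -- depth lower bounds
  have hβ1 : ∀ s ∈ X, 1 ≤ bform M (ρ (v⁻¹ * u) (simpleRoot s)) o := by
    intro s hs
    exact auxE cs ρ hρ hρform o ho s _ (v⁻¹ * u) (Nat.lt_succ_self _) (hβnn s hs)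
  have hγ1 : ∀ t ∈ Y, 1 ≤ bform M (ρ (u⁻¹ * v) (simpleRoot t)) o := by
    intro t ht
    exact auxE cs ρ hρ hρform o ho t _ (u⁻¹ * v) (Nat.lt_succ_self _) (hγnn t ht)
  -- the key equality ⟨β_s, o⟩ = 1
  have hβo : ∀ s ∈ X, bform M (ρ (v⁻¹ * u) (simpleRoot s)) o = 1 := by
    intro s hs
    set β := ρ (v⁻¹ * u) (simpleRoot s) with hβdef
    have hsum : bform M β o = β.sum (fun _ c => c) := aux_sum_coords M o ho β
    have hαs : bform M (simpleRoot s) o = 1 := by rw [bform_comm, ho s]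
    have hαexp : simpleRoot s = ρ (u⁻¹ * v) β := by
      rw [hβdef, ← rho_mul]
      have h1 : (u⁻¹ * v) * (v⁻¹ * u) = 1 := by group
      rw [h1, map_one]
      rfl
    have hexpandL : (bform M).flip o (ρ (u⁻¹ * v) β)
        = β.sum (fun t c => c * (bform M).flip o (ρ (u⁻¹ * v) (simpleRoot t))) := by
      conv_lhs => rw [finsupp_eq_sum_simpleRoot β]
      rw [map_finsuppSum, map_finsuppSum]
      apply Finsupp.sum_congr
      intro t _
      simp only [map_smul, smul_eq_mul]
    have hexpand : bform M (ρ (u⁻¹ * v) β) o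
        = β.sum (fun t c => c * bform M (ρ (u⁻¹ * v) (simpleRoot t)) o) := hexpandL
    have hle : β.sum (fun _ c => c)
        ≤ β.sum (fun t c => c * bform M (ρ (u⁻¹ * v) (simpleRoot t)) o) := by
      apply Finset.sum_le_sum
      intro t htmem
      have htY : t ∈ Y := (Finsupp.mem_supported _ _ |>.mp (hβsupp s hs)) htmem
      have h1 : 1 ≤ bform M (ρ (u⁻¹ * v) (simpleRoot t)) o := hγ1 t htY
      have h0 : 0 ≤ β t := hβnn s hs t
      nlinarith
    have hup : bform M β o ≤ 1 := by
      rw [hsum]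
      calc β.sum (fun _ c => c)
          ≤ β.sum (fun t c => c * bform M (ρ (u⁻¹ * v) (simpleRoot t)) o) := hle
        _ = bform M (ρ (u⁻¹ * v) β) o := hexpand.symm
        _ = bform M (simpleRoot s) o := by rw [← hαexp]
        _ = 1 := hαs
    have hlo : 1 ≤ bform M β o := hβ1 s hs
    linarith
  -- Goal 1
  have goal1 : ∀ s ∈ X, bform M (ρ u (simpleRoot s)) (ρ v o - ρ u o) = 0 := by
    intro s hs
    have h1 : bform M (ρ u (simpleRoot s)) (ρ v o) = 1 := by
      have h2 := hρform v⁻¹ (ρ u (simpleRoot s)) (ρ v o)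
      rw [rho_inv_cancel, ← rho_mul] at h2
      rw [← h2, hβo s hs]
    have h2 : bform M (ρ u (simpleRoot s)) (ρ u o) = 1 := by
      rw [hρform, bform_comm, ho s]
    rw [map_sub, h1, h2, sub_self]
  refine ⟨goal1, ?_⟩
  -- Goal 2
  intro g hg
  obtain ⟨h, hh, rfl⟩ := hg
  set z := ρ v o - ρ u o with hz
  show ρ ((MulAut.conj u).toMonoidHom h) z = z
  have hconjapp : ∀ x : W, (MulAut.conj u).toMonoidHom x = u * x * u⁻¹ := by
    intro x; simp [MulAut.conj_apply]
  rw [hconjapp]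
  induction hh using Subgroup.closure_induction with
  | mem x hx =>
    obtain ⟨s, hsX, rfl⟩ := hx
    rw [rho_conj_refl cs ρ hρ hρform u s z, hz, goal1 s hsX]
    simp
  | one =>
    have : u * 1 * u⁻¹ = 1 := by group
    rw [this, map_one]
    rfl
  | mul x y hx hy px py =>
    have : u * (x * y) * u⁻¹ = (u * x * u⁻¹) * (u * y * u⁻¹) := by group
    rw [this, rho_mul, py, px]
  | inv x hx px =>
    have h1 : u * x⁻¹ * u⁻¹ = (u * x * u⁻¹)⁻¹ := by group
    rw [h1]
    conv_lhs => rw [← px]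
    rw [rho_inv_cancel]
end
end
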